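/- Let p be a positive integer, q an integer, and ω = exp(2πi/p). Then, as complex numbers, (1/p)·∑_{k=1}^{p−1} ω^{kq}/(1 − ω^{−k}) = (p − 1)/(2p) − {q/p}. -/

import Mathlib

open scoped BigOperators

/-- Polynomial identity: `(x-1) * Σ_{j<n} j x^j = (n-1) x^n - Σ_{j<n} x^j + 1`. -/
lemma aux_sum_id (x : ℂ) (n : ℕ) :
    (x - 1) * ∑ j ∈ Finset.range n, (j : ℂ) * x ^ j
      = ((n : ℂ) - 1) * x ^ n - (∑ j ∈ Finset.range n, x ^ j) + 1 := by
  induction n with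
  | zero => simp
  | succ n ih =>
    rw [Finset.sum_range_succ, Finset.sum_range_succ (f := fun j => x ^ j)]
    push_cast
    ring_nf
    ring_nf at ih
    linear_combination ih

/-- For a nontrivial `p`-th root of unity `x`, `(1-x)⁻¹ = -(1/p) Σ_{j<p} j x^j`. -/
lemma aux_inv_eq (p : ℕ) (hp : 0 < p) (x : ℂ) (hx1 : x ≠ 1) (hxp : x ^ p = 1) :
    (1 - x)⁻¹ = -(1 / (p : ℂ)) * ∑ j ∈ Finset.range p, (j : ℂ) * x ^ j := by
  have hG : ∑ j ∈ Finset.range p, x ^ j = 0 := by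
    rw [geom_sum_eq hx1, hxp, sub_self, zero_div]
  have key : (x - 1) * ∑ j ∈ Finset.range p, (j : ℂ) * x ^ j = (p : ℂ) := by
    rw [aux_sum_id, hxp, hG]; ring
  have hx1' : x - 1 ≠ 0 := sub_ne_zero.mpr hx1
  have hp' : (p : ℂ) ≠ 0 := Nat.cast_ne_zero.mpr hp.ne'
  have h1x : 1 - x ≠ 0 := by
    intro h; apply hx1'; linear_combination -h
  field_simp
  linear_combination -key

theorem sum_rootOfUnity_div_eq (p : ℕ) (hp : 0 < p) (q : ℤ) :
    (1 / (p : ℂ)) * ∑ k ∈ Finset.Ioo 0 p,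
        Complex.exp (2 * Real.pi * Complex.I / p) ^ ((k : ℤ) * q) /
          (1 - Complex.exp (2 * Real.pi * Complex.I / p) ^ (-(k : ℤ)))
      = (((p : ℝ) - 1) / (2 * p) - Int.fract ((q : ℝ) / p) : ℝ) := by
  set ζ : ℂ := Complex.exp (2 * Real.pi * Complex.I / p) with hζdef
  have hζ : IsPrimitiveRoot ζ p := Complex.isPrimitiveRoot_exp p hp.ne'
  have hζ0 : ζ ≠ 0 := Complex.exp_ne_zero _
  have hp' : (p : ℂ) ≠ 0 := Nat.cast_ne_zero.mpr hp.ne'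
  have hpZ : (0 : ℤ) < (p : ℤ) := by exact_mod_cast hp
  -- orthogonality
  have orth : ∀ m : ℤ, ∑ k ∈ Finset.range p, ζ ^ (m * (k : ℤ))
      = if (p : ℤ) ∣ m then (p : ℂ) else 0 := by
    intro m
    have hterm : ∀ k : ℕ, ζ ^ (m * (k : ℤ)) = (ζ ^ m) ^ k := by
      intro k; rw [zpow_mul, zpow_natCast]
    rw [Finset.sum_congr rfl fun k _ => hterm k]
    by_cases hd : (p : ℤ) ∣ m
    · have : ζ ^ m = 1 := (hζ.zpow_eq_one_iff_dvd m).mpr hd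
      simp [this, hd]
    · have h1 : ζ ^ m ≠ 1 := fun h => hd ((hζ.zpow_eq_one_iff_dvd m).mp h)
      have hmp : (ζ ^ m) ^ p = 1 := by
        rw [← zpow_natCast, ← zpow_mul, mul_comm, zpow_mul, zpow_natCast, hζ.pow_eq_one,
          one_zpow]
      rw [geom_sum_eq h1, hmp, sub_self, zero_div, if_neg hd]
  -- set r = q mod p
  set r : ℕ := (q % (p : ℤ)).toNat with hrdef
  have hr0 : (0 : ℤ) ≤ q % p := Int.emod_nonneg q hpZ.ne'
  have hrcast : (r : ℤ) = q % p := Int.toNat_of_nonneg hr0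
  have hrlt : r < p := by
    have := Int.emod_lt_of_pos q hpZ
    omega
  -- step 1: rewrite each summand
  have step1 : ∀ k ∈ Finset.Ioo 0 p,
      ζ ^ ((k : ℤ) * q) / (1 - ζ ^ (-(k : ℤ)))
        = -(1 / (p : ℂ)) * ∑ j ∈ Finset.range p, (j : ℂ) * ζ ^ (((q : ℤ) - j) * k) := by
    intro k hk
    rw [Finset.mem_Ioo] at hk
    have hx1 : ζ ^ (-(k : ℤ)) ≠ 1 := by
      rw [Ne, hζ.zpow_eq_one_iff_dvd, Int.dvd_neg]
      intro hdvd
      have := Int.le_of_dvd (by exact_mod_cast hk.1) hdvd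
      exact absurd (by exact_mod_cast this) (not_le.mpr hk.2)
    have hxp : (ζ ^ (-(k : ℤ))) ^ p = 1 := by
      rw [← zpow_natCast, ← zpow_mul, mul_comm, zpow_mul, zpow_natCast, hζ.pow_eq_one,
        one_zpow]
    rw [div_eq_mul_inv, aux_inv_eq p hp _ hx1 hxp, mul_left_comm]
    congr 1
    rw [Finset.mul_sum]
    refine Finset.sum_congr rfl fun j _ => ?_
    have he : (((q : ℤ) - j) * k) = ((k : ℤ) * q) + (-(k : ℤ)) * (j : ℤ) := by ring
    rw [he, zpow_add₀ hζ0, ← zpow_natCast (ζ ^ (-(k : ℤ))) j, ← zpow_mul]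
    ring
  have hS : ∑ k ∈ Finset.Ioo 0 p, ζ ^ ((k : ℤ) * q) / (1 - ζ ^ (-(k : ℤ)))
      = ∑ k ∈ Finset.Ioo 0 p,
          (-(1 / (p : ℂ)) * ∑ j ∈ Finset.range p, (j : ℂ) * ζ ^ (((q : ℤ) - j) * k)) :=
    Finset.sum_congr rfl step1
  rw [hS]
  -- inner sum over k
  have inner : ∀ j : ℕ, ∑ k ∈ Finset.Ioo 0 p, ζ ^ (((q : ℤ) - j) * k)
      = (if (p : ℤ) ∣ ((q : ℤ) - j) then (p : ℂ) else 0) - 1 := by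
    intro j
    have h0p : insert 0 (Finset.Ioo 0 p) = Finset.range p := by
      rw [Finset.Ioo_insert_left hp, Finset.range_eq_Ico]
    have := orth ((q : ℤ) - j)
    rw [← h0p, Finset.sum_insert (by simp)] at this
    rw [Nat.cast_zero, mul_zero, zpow_zero] at this
    linear_combination this
  -- swap the two sums
  have swap : ∑ k ∈ Finset.Ioo 0 p,
      (-(1 / (p : ℂ)) * ∑ j ∈ Finset.range p, (j : ℂ) * ζ ^ (((q : ℤ) - j) * k))
      = -(1 / (p : ℂ)) * ∑ j ∈ Finset.range p,
          (j : ℂ) * ((if (p : ℤ) ∣ ((q : ℤ) - j) then (p : ℂ) else 0) - 1) := by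
    rw [← Finset.mul_sum, Finset.sum_comm]
    congr 1
    refine Finset.sum_congr rfl fun j _ => ?_
    rw [← Finset.mul_sum, inner j]
  rw [swap]
  -- evaluate the j-sum
  have h1 : ∑ j ∈ Finset.range p, (j : ℂ) * (if (p : ℤ) ∣ ((q : ℤ) - j) then (p : ℂ) else 0)
      = (r : ℂ) * p := by
    rw [Finset.sum_eq_single r]
    · have hdvd : (p : ℤ) ∣ (q : ℤ) - r := by
        rw [hrcast, Int.emod_def]
        exact ⟨q / p, by ring⟩
      rw [if_pos hdvd]
    · intro j hj hne
      rw [Finset.mem_range] at hj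
      have : ¬ (p : ℤ) ∣ (q : ℤ) - j := by
        intro hdvd
        have hdr : (p : ℤ) ∣ (q : ℤ) - r := by
          rw [hrcast, Int.emod_def]; exact ⟨q / p, by ring⟩
        have hsub : (p : ℤ) ∣ (r : ℤ) - j := by
          have h' := dvd_sub hdvd hdr
          have e : ((q : ℤ) - j) - ((q : ℤ) - r) = (r : ℤ) - j := by ring
          rwa [e] at h'
        have hz : (r : ℤ) - j = 0 := by
          refine Int.eq_zero_of_abs_lt_dvd hsub ?_
          have hjp : (j : ℤ) < p := by exact_mod_cast hj
          have hrp : (r : ℤ) < p := by exact_mod_cast hrlt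
          rw [abs_lt]
          constructor <;> omega
        exact hne (by omega)
      rw [if_neg this, mul_zero]
    · intro h
      exact absurd (Finset.mem_range.mpr hrlt) h
  have h2 : (∑ j ∈ Finset.range p, (j : ℂ)) * 2 = (p : ℂ) * ((p : ℂ) - 1) := by
    have := Finset.sum_range_id_mul_two p
    have h := congrArg (fun n : ℕ => (n : ℂ)) this
    push_cast at h
    rw [Nat.cast_sub hp] at h
    push_cast at h
    linear_combination h
  have h3 : ∑ j ∈ Finset.range p,
      (j : ℂ) * ((if (p : ℤ) ∣ ((q : ℤ) - j) then (p : ℂ) else 0) - 1)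
      = (r : ℂ) * p - (∑ j ∈ Finset.range p, (j : ℂ)) := by
    rw [← h1, ← Finset.sum_sub_distrib]
    exact Finset.sum_congr rfl fun j _ => by ring
  rw [h3]
  -- fract computation
  have hfract : Int.fract ((q : ℝ) / p) = (r : ℝ) / p := by
    have hq : (q : ℝ) = (p : ℝ) * ((q / p : ℤ) : ℝ) + (r : ℝ) := by
      have h := Int.mul_ediv_add_emod q p
      have h2 : (p : ℤ) * (q / p) + (r : ℤ) = q := by rw [hrcast]; exact h
      have h3 := congrArg (Int.cast : ℤ → ℝ) h2
      push_cast at h3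
      linarith
    have hppos : (0 : ℝ) < p := by exact_mod_cast hp
    rw [hq]
    rw [show ((p : ℝ) * ((q / p : ℤ) : ℝ) + (r : ℝ)) / p = ((q / p : ℤ) : ℝ) + (r : ℝ) / p by
      field_simp]
    rw [Int.fract_intCast_add, Int.fract_eq_self.mpr ⟨by positivity, by
      rw [div_lt_one hppos]; exact_mod_cast hrlt⟩]
  rw [hfract]
  -- final algebra
  have h2' : (∑ j ∈ Finset.range p, (j : ℂ)) = (p : ℂ) * ((p : ℂ) - 1) / 2 := by
    linear_combination h2 / 2
  push_cast
  rw [h2']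
  field_simp
  ring
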